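/- Let 𝒜 ⊆ P(ℕ) be an almost disjoint family of cardinality κ ≥ 𝔡 with cof([κ]^ℵ₀) = κ. Then the Isbell–Mrówka space Ψ(𝒜) is not star-Menger. Equivalently (via the combinatorial characterization): there is a function A ↦ f_A from 𝒜 to ℕ^ℕ such that for all finite ℱ₁, ℱ₂, … ⊆ 𝒜 there exists A ∈ 𝒜 with (A \ f_A(n)) ∩ ⋃_{B∈ℱ_n}(B \ f_B(n)) = ∅ for all n. -/
import Mathlib


open Set Filter

universe u

/-- Least cardinality of a cofinal subset of a preorder. -/
noncomputable def poCof (α : Type u) [Preorder α] : Cardinal.{u} :=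
  sInf { c | ∃ S : Set α, (∀ a : α, ∃ b ∈ S, a ≤ b) ∧ Cardinal.mk S = c }

/-- `cof([X]^ℵ₀)`: cofinality of the family of countably infinite subsets of `X`,
ordered by inclusion. -/
noncomputable def ctblCof (X : Type u) : Cardinal.{u} :=
  poCof { A : Set X // A.Countable ∧ A.Infinite }

/-- The dominating number 𝔡. -/
noncomputable def dNum : Cardinal :=
  sInf { c | ∃ D : Set (ℕ → ℕ),
    (∀ f : ℕ → ℕ, ∃ g ∈ D, ∀ᶠ n in atTop, f n ≤ g n) ∧ Cardinal.mk D = c }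

/-- The unbounding number 𝔟. -/
noncomputable def bNum : Cardinal :=
  sInf { c | ∃ B : Set (ℕ → ℕ),
    (∀ g : ℕ → ℕ, ∃ f ∈ B, ¬ ∀ᶠ n in atTop, f n ≤ g n) ∧ Cardinal.mk B = c }

/-- An almost disjoint family on ℕ. -/
def AlmostDisjoint (𝒜 : Set (Set ℕ)) : Prop :=
  (∀ A ∈ 𝒜, A.Infinite) ∧ ∀ A ∈ 𝒜, ∀ B ∈ 𝒜, A ≠ B → (A ∩ B).Finite

/-- The underlying set of the Isbell–Mrówka space `Ψ(𝒜) = ℕ ∪ 𝒜`. -/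
abbrev PsiSpace (𝒜 : Set (Set ℕ)) : Type := ℕ ⊕ ↥𝒜

/-- The Isbell–Mrówka topology: naturals are isolated, and basic neighborhoods
of `A ∈ 𝒜` are `{A} ∪ (A \ F)` for finite `F`. -/
instance psiTop (𝒜 : Set (Set ℕ)) : TopologicalSpace (PsiSpace 𝒜) where
  IsOpen U := ∀ A : 𝒜, Sum.inr A ∈ U → { n : ℕ | n ∈ (A : Set ℕ) ∧ Sum.inl n ∉ U }.Finite
  isOpen_univ := by
    intro A _
    convert Set.finite_empty using 1
    ext n; simp
  isOpen_inter := by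
    intro U V hU hV A hA
    apply ((hU A hA.1).union (hV A hA.2)).subset
    rintro n ⟨h1, h2⟩
    by_cases h : Sum.inl n ∈ U
    · exact Or.inr ⟨h1, fun hv => h2 ⟨h, hv⟩⟩
    · exact Or.inl ⟨h1, h⟩
  isOpen_sUnion := by
    intro s hs A hA
    obtain ⟨t, ht, hAt⟩ := hA
    apply (hs t ht A hAt).subset
    rintro n ⟨h1, h2⟩
    exact ⟨h1, fun h => h2 ⟨t, ht, h⟩⟩

/-- `st(S, 𝒰) = ⋃ {U ∈ 𝒰 : U ∩ S ≠ ∅}`. -/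
def starSet {X : Type*} (S : Set X) (𝒰 : Set (Set X)) : Set X :=
  ⋃₀ { U ∈ 𝒰 | (U ∩ S).Nonempty }

def StarMenger (X : Type*) [TopologicalSpace X] : Prop :=
  ∀ 𝒰 : ℕ → Set (Set X), (∀ n, ∀ U ∈ 𝒰 n, IsOpen U) → (∀ n, ⋃₀ 𝒰 n = univ) →
    ∃ ℱ : ℕ → Set (Set X), (∀ n, ℱ n ⊆ 𝒰 n ∧ (ℱ n).Finite) ∧
      (⋃ n, starSet (⋃₀ ℱ n) (𝒰 n)) = univ

def StarHurewicz (X : Type*) [TopologicalSpace X] : Prop :=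
  ∀ 𝒰 : ℕ → Set (Set X), (∀ n, ∀ U ∈ 𝒰 n, IsOpen U) → (∀ n, ⋃₀ 𝒰 n = univ) →
    ∃ ℱ : ℕ → Set (Set X), (∀ n, ℱ n ⊆ 𝒰 n ∧ (ℱ n).Finite) ∧
      ∀ x : X, ∀ᶠ n in atTop, x ∈ starSet (⋃₀ ℱ n) (𝒰 n)

def StarRothberger (X : Type*) [TopologicalSpace X] : Prop :=
  ∀ 𝒰 : ℕ → Set (Set X), (∀ n, ∀ U ∈ 𝒰 n, IsOpen U) → (∀ n, ⋃₀ 𝒰 n = univ) →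
    ∃ U : ℕ → Set X, (∀ n, U n ∈ 𝒰 n) ∧ (⋃ n, starSet (U n) (𝒰 n)) = univ

def StronglyStarMenger (X : Type*) [TopologicalSpace X] : Prop :=
  ∀ 𝒰 : ℕ → Set (Set X), (∀ n, ∀ U ∈ 𝒰 n, IsOpen U) → (∀ n, ⋃₀ 𝒰 n = univ) →
    ∃ F : ℕ → Set X, (∀ n, (F n).Finite) ∧ (⋃ n, starSet (F n) (𝒰 n)) = univ

def StronglyStarHurewicz (X : Type*) [TopologicalSpace X] : Prop :=
  ∀ 𝒰 : ℕ → Set (Set X), (∀ n, ∀ U ∈ 𝒰 n, IsOpen U) → (∀ n, ⋃₀ 𝒰 n = univ) →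
    ∃ F : ℕ → Set X, (∀ n, (F n).Finite) ∧
      ∀ x : X, ∀ᶠ n in atTop, x ∈ starSet (F n) (𝒰 n)


section AuxNSM

open Cardinal

private lemma exists_dom_family_nsm :
    ∃ D : Set (ℕ → ℕ), (∀ f : ℕ → ℕ, ∃ g ∈ D, ∀ᶠ n in atTop, f n ≤ g n) ∧
      Cardinal.mk D = dNum := by
  have hne : { c | ∃ D : Set (ℕ → ℕ),
      (∀ f : ℕ → ℕ, ∃ g ∈ D, ∀ᶠ n in atTop, f n ≤ g n) ∧ Cardinal.mk D = c }.Nonempty :=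
    ⟨_, Set.univ, fun f => ⟨f, trivial, Eventually.of_forall fun n => le_rfl⟩, rfl⟩
  exact csInf_mem hne

private lemma aleph0_lt_dNum_nsm : Cardinal.aleph0 < dNum := by
  obtain ⟨D, hdom, hcard⟩ := exists_dom_family_nsm
  rw [← not_le, ← hcard]
  intro hle
  haveI hc : Countable ↥D := Cardinal.mk_le_aleph0_iff.mp hle
  haveI hne' : Nonempty ↥D := by
    obtain ⟨g, hg, -⟩ := hdom 0; exact ⟨⟨g, hg⟩⟩
  obtain ⟨u, hu⟩ := exists_surjective_nat ↥D
  set F : ℕ → ℕ := fun n => (Finset.range (n+1)).sup (fun i => (u i : ℕ → ℕ) n) + 1 with hF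
  obtain ⟨g, hgD, hgF⟩ := hdom F
  obtain ⟨i, hi⟩ := hu ⟨g, hgD⟩
  obtain ⟨N, hN⟩ := eventually_atTop.mp hgF
  have h1 : F (max N i) ≤ g (max N i) := hN _ (le_max_left _ _)
  have h2 : (u i : ℕ → ℕ) (max N i) ≤
      (Finset.range (max N i + 1)).sup (fun j => (u j : ℕ → ℕ) (max N i)) :=
    Finset.le_sup (f := fun j => (u j : ℕ → ℕ) (max N i))
      (Finset.mem_range.mpr (Nat.lt_succ_of_le (le_max_right N i)))
  have h3 : (u i : ℕ → ℕ) (max N i) = g (max N i) := by rw [hi]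
  have h4 : (Finset.range (max N i + 1)).sup (fun j => (u j : ℕ → ℕ) (max N i)) + 1
      = F (max N i) := rfl
  omega

private lemma exists_cof_family_nsm (X : Type u) [Preorder X] :
    ∃ S : Set X, (∀ a : X, ∃ b ∈ S, a ≤ b) ∧ Cardinal.mk S = poCof X := by
  have hne : { c | ∃ S : Set X, (∀ a : X, ∃ b ∈ S, a ≤ b) ∧ Cardinal.mk S = c }.Nonempty :=
    ⟨_, Set.univ, fun a => ⟨a, trivial, le_rfl⟩, rfl⟩
  exact csInf_mem hne

private lemma key_nsm (𝒜 : Set (Set ℕ)) (had : AlmostDisjoint 𝒜)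
    (hd : dNum ≤ Cardinal.mk ↥𝒜) (hcof : ctblCof ↥𝒜 = Cardinal.mk ↥𝒜) :
    ∃ f : 𝒜 → ℕ → ℕ, ∀ (ℱ : ℕ → Finset 𝒜) (h : ℕ → ℕ), ∃ A : 𝒜,
      (∀ n, h n ≤ f A n) ∧ ∀ n, ∀ B ∈ ℱ n,
        ((A : Set ℕ) \ Set.Iio (f A n)) ∩ ((B : Set ℕ) \ Set.Iio (f B n)) = ∅ := by
  classical
  have hκ : Cardinal.aleph0 < Cardinal.mk ↥𝒜 := lt_of_lt_of_le aleph0_lt_dNum_nsm hd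
  haveI hinf : Infinite ↥𝒜 := Cardinal.infinite_iff.mpr hκ.le
  obtain ⟨D₀, hD₀, hD₀c⟩ := exists_dom_family_nsm
  set D' : Set (ℕ → ℕ) :=
    Set.range (fun p : ↥D₀ × ℕ => fun n => (p.1 : ℕ → ℕ) n + p.2) with hD'
  have hD'dom : ∀ g : ℕ → ℕ, ∃ d ∈ D', ∀ n, g n ≤ d n := by
    intro g
    obtain ⟨g₀, hg₀, hev⟩ := hD₀ g
    obtain ⟨N, hN⟩ := eventually_atTop.mp hev
    refine ⟨fun n => g₀ n + (Finset.range N).sup g, ⟨(⟨g₀, hg₀⟩, _), rfl⟩, ?_⟩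
    intro n
    rcases le_or_gt N n with h | h
    · exact le_trans (hN n h) (Nat.le_add_right _ _)
    · exact le_trans (Finset.le_sup (Finset.mem_range.mpr h)) (Nat.le_add_left _ _)
  have hD'card : Cardinal.mk ↥D' ≤ Cardinal.mk ↥𝒜 := by
    calc Cardinal.mk ↥D' ≤ Cardinal.mk (↥D₀ × ℕ) := Cardinal.mk_range_le
      _ = Cardinal.mk ↥D₀ * Cardinal.mk ℕ := by
          simp [Cardinal.mk_prod]
      _ = dNum := by
          rw [hD₀c, Cardinal.mk_nat,
            Cardinal.mul_eq_max aleph0_lt_dNum_nsm.le le_rfl,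
            max_eq_left aleph0_lt_dNum_nsm.le]
      _ ≤ _ := hd
  haveI hD'ne : Nonempty ↥D' := by
    obtain ⟨d, hd', -⟩ := hD'dom 0; exact ⟨⟨d, hd'⟩⟩
  obtain ⟨S, hScof, hSc⟩ :=
    exists_cof_family_nsm {A : Set ↥𝒜 // A.Countable ∧ A.Infinite}
  have hScard : Cardinal.mk ↥S = Cardinal.mk ↥𝒜 := by rw [hSc]; exact hcof
  haveI hSne : Nonempty ↥S := by
    obtain ⟨b, hb, -⟩ := hScof
      ⟨Set.range (Infinite.natEmbedding ↥𝒜), Set.countable_range _,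
        Set.infinite_range_of_injective (Infinite.natEmbedding ↥𝒜).injective⟩
    exact ⟨⟨b, hb⟩⟩
  have hmul : Cardinal.mk (↥𝒜 × ↥𝒜) = Cardinal.mk ↥𝒜 := by
    rw [Cardinal.mk_prod]
    simp only [Cardinal.lift_id]
    exact Cardinal.mul_eq_self hκ.le
  obtain ⟨e0⟩ := Cardinal.eq.mp hmul
  set e : ↥𝒜 ≃ ↥𝒜 × ↥𝒜 := e0.symm with he
  have hprod : Cardinal.mk (↥S × ↥D') ≤ Cardinal.mk ↥𝒜 := by
    rw [Cardinal.mk_prod]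
    simp only [Cardinal.lift_id]
    calc Cardinal.mk ↥S * Cardinal.mk ↥D' ≤ Cardinal.mk ↥𝒜 * Cardinal.mk ↥𝒜 :=
        mul_le_mul' hScard.le hD'card
      _ = Cardinal.mk ↥𝒜 := Cardinal.mul_eq_self hκ.le
  obtain ⟨j⟩ := (Cardinal.le_def _ _).mp hprod
  haveI : Nonempty (↥S × ↥D') := ⟨⟨hSne.some, hD'ne.some⟩⟩
  set σ : ↥𝒜 → ↥S × ↥D' := Function.invFun j with hσ
  have hσj : ∀ p : ↥S × ↥D', σ (j p) = p := Function.leftInverse_invFun j.injective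
  have hEex : ∀ c : {A : Set ↥𝒜 // A.Countable ∧ A.Infinite},
      ∃ g : ℕ → ↥𝒜, (c : Set ↥𝒜) = Set.range g :=
    fun c => c.2.1.exists_eq_range c.2.2.nonempty
  choose E hE using hEex
  have hABfin : ∀ A B : ↥𝒜, A ≠ B → ((A : Set ℕ) ∩ (B : Set ℕ)).Finite :=
    fun A B hne => had.2 A A.2 B B.2 (fun hc => hne (Subtype.ext hc))
  set m : ↥𝒜 → ↥𝒜 → ℕ := fun A B =>
    if h : A = B then 0 else ((hABfin A B h).toFinset.sup id) + 1 with hm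
  have hmlt : ∀ A B : ↥𝒜, (hne : A ≠ B) → ∀ x, x ∈ (A : Set ℕ) ∩ (B : Set ℕ) → x < m A B := by
    intro A B hne x hx
    have h1 : x ∈ (hABfin A B hne).toFinset := (Set.Finite.mem_toFinset _).mpr hx
    have h2 : id x ≤ (hABfin A B hne).toFinset.sup id := Finset.le_sup h1
    simp only [hm]
    rw [dif_neg hne]
    simpa using Nat.lt_succ_of_le h2
  set f : ↥𝒜 → ℕ → ℕ := fun A n =>
    max (((σ (e A).2).2 : ℕ → ℕ) n)
      ((Finset.range (((σ (e A).2).2 : ℕ → ℕ) n + 1)).sup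
        (fun i => m A (E (σ (e A).2).1.1 i))) with hf
  refine ⟨f, ?_⟩
  intro ℱ h
  set C : Set ↥𝒜 := ⋃ n, (ℱ n : Set ↥𝒜) with hC
  have hCc : C.Countable := Set.countable_iUnion fun n => (ℱ n).countable_toSet
  set u := Infinite.natEmbedding ↥𝒜 with hu
  obtain ⟨s, hsS, hsub⟩ := hScof
    ⟨C ∪ Set.range u, hCc.union (Set.countable_range _),
      (Set.infinite_range_of_injective u.injective).mono Set.subset_union_right⟩
  have hCs : C ⊆ (s : Set ↥𝒜) := fun B hB => hsub (Or.inl hB)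
  have hidx : ∀ B ∈ (s : Set ↥𝒜), ∃ i, E s i = B := by
    intro B hB
    rw [hE s] at hB
    exact hB
  set idx : ↥𝒜 → ℕ := fun B => if hB : ∃ i, E s i = B then Nat.find hB else 0 with hidxd
  set g : ℕ → ℕ := fun n => max (h n) ((ℱ n).sup idx) with hg
  obtain ⟨d, hdD', hdg⟩ := hD'dom g
  set a₀ : ↥𝒜 := j (⟨s, hsS⟩, ⟨d, hdD'⟩) with ha₀
  have hx : ∃ x : ↥𝒜, e.symm (x, a₀) ∉ (s : Set ↥𝒜) := by
    by_contra hall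
    push_neg at hall
    have hinj : Function.Injective
        (fun x : ↥𝒜 => (⟨e.symm (x, a₀), hall x⟩ : ↥(s : Set ↥𝒜))) := by
      intro x y hxy
      have h2 : e.symm (x, a₀) = e.symm (y, a₀) := congrArg Subtype.val hxy
      have h3 := e.symm.injective h2
      exact (Prod.ext_iff.mp h3).1
    have hle : Cardinal.mk ↥𝒜 ≤ Cardinal.mk ↥(s : Set ↥𝒜) :=
      Cardinal.mk_le_of_injective hinj
    have hle2 : Cardinal.mk ↥(s : Set ↥𝒜) ≤ Cardinal.aleph0 :=
      Cardinal.mk_le_aleph0_iff.mpr (Set.countable_coe_iff.mpr s.2.1)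
    exact absurd (hle.trans hle2) (not_le.mpr hκ)
  obtain ⟨x, hxs⟩ := hx
  set A : ↥𝒜 := e.symm (x, a₀) with hA
  have heA : e A = (x, a₀) := e.apply_symm_apply _
  have hσA : σ (e A).2 = (⟨s, hsS⟩, ⟨d, hdD'⟩) := by
    rw [heA, ha₀]
    exact hσj _
  have hfA : ∀ n, f A n
      = max (d n) ((Finset.range (d n + 1)).sup (fun i => m A (E s i))) := by
    intro n
    simp only [hf, hσA]
  have hdn : ∀ n, g n ≤ d n := hdg
  refine ⟨A, ?_, ?_⟩
  · intro n
    have : h n ≤ g n := le_max_left _ _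
    have := this.trans (hdn n)
    rw [hfA n]
    exact this.trans (le_max_left _ _)
  · intro n B hBF
    have hBC : B ∈ C := Set.mem_iUnion.mpr ⟨n, hBF⟩
    have hBs : B ∈ (s : Set ↥𝒜) := hCs hBC
    have hne : A ≠ B := fun hAB => hxs (hAB ▸ hBs)
    have hBex : ∃ i, E s i = B := hidx B hBs
    have hile : Nat.find hBex ≤ d n := by
      have h1 : idx B = Nat.find hBex := by
        simp only [hidxd]
        rw [dif_pos hBex]
      have h2 : idx B ≤ (ℱ n).sup idx := Finset.le_sup hBF
      have h3 : (ℱ n).sup idx ≤ g n := by rw [hg]; exact le_max_right _ _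
      have h4 := hdn n
      omega
    have hmem : Nat.find hBex ∈ Finset.range (d n + 1) :=
      Finset.mem_range.mpr (Nat.lt_succ_of_le hile)
    have h5 : m A (E s (Nat.find hBex))
        ≤ (Finset.range (d n + 1)).sup (fun i => m A (E s i)) :=
      Finset.le_sup (f := fun i => m A (E s i)) hmem
    rw [Nat.find_spec hBex] at h5
    have h7 : m A B ≤ f A n := h5.trans (by rw [hfA n]; exact le_max_right _ _)
    rw [Set.eq_empty_iff_forall_notMem]
    rintro y ⟨⟨hyA, hyfA⟩, hyB, hyfB⟩
    have hlt := hmlt A B hne y ⟨hyA, hyB⟩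
    have h6 : f A n ≤ y := not_lt.mp hyfA
    omega

end AuxNSM

/-- an almost disjoint family of cardinality `κ ≥ 𝔡` with
`cof([κ]^ℵ₀) = κ` yields a non-star-Menger Ψ-space; equivalently, the negation of the
combinatorial characterization holds. -/
theorem not_starMenger_psiSpace (𝒜 : Set (Set ℕ)) (had : AlmostDisjoint 𝒜)
    (hd : dNum ≤ Cardinal.mk ↥𝒜) (hcof : ctblCof ↥𝒜 = Cardinal.mk ↥𝒜) :
    ¬ StarMenger (PsiSpace 𝒜) ∧
      ∃ f : 𝒜 → ℕ → ℕ, ∀ ℱ : ℕ → Finset 𝒜, ∃ A : 𝒜, ∀ n : ℕ,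
        ((A : Set ℕ) \ Set.Iio (f A n)) ∩
          (⋃ B ∈ ℱ n, ((B : Set ℕ) \ Set.Iio (f B n))) = ∅ := by
  classical
  obtain ⟨f, hkey⟩ := key_nsm 𝒜 had hd hcof
  constructor
  · intro hSM
    set U : ↥𝒜 → ℕ → Set (PsiSpace 𝒜) := fun B n =>
      {Sum.inr B} ∪ Sum.inl '' ((B : Set ℕ) \ Set.Iio (f B n)) with hU
    set 𝒰 : ℕ → Set (Set (PsiSpace 𝒜)) := fun n =>
      (Set.range fun B => U B n) ∪
        (Set.range fun k : ℕ => ({Sum.inl k} : Set (PsiSpace 𝒜))) with h𝒰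
    have hinrU : ∀ n (A B : ↥𝒜), Sum.inr A ∈ U B n → A = B := by
      intro n A B hA
      rcases hA with h1 | ⟨k, -, h2⟩
      · exact Sum.inr.inj h1
      · exact absurd h2 (by simp)
    have hopen : ∀ n, ∀ V ∈ 𝒰 n, IsOpen V := by
      rintro n V (⟨B, rfl⟩ | ⟨k, rfl⟩)
      · intro A hA
        have hAB : A = B := hinrU n A B hA
        subst hAB
        apply (Set.finite_Iio (f A n)).subset
        rintro k ⟨hk1, hk2⟩
        by_contra hk3
        exact hk2 (Or.inr ⟨k, ⟨hk1, hk3⟩, rfl⟩)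
      · intro A hA
        exact absurd hA (by simp)
    have hcov : ∀ n, ⋃₀ 𝒰 n = univ := by
      intro n
      ext z
      simp only [Set.mem_univ, iff_true]
      cases z with
      | inl k => exact ⟨{Sum.inl k}, Or.inr ⟨k, rfl⟩, rfl⟩
      | inr B => exact ⟨U B n, Or.inl ⟨B, rfl⟩, Or.inl rfl⟩
    obtain ⟨ℱ', hsub, hcover⟩ := hSM 𝒰 hopen hcov
    have hUinj : ∀ n, Function.Injective (fun B : ↥𝒜 => U B n) := by
      intro n B B' hBB'
      have : Sum.inr B ∈ U B' n := by
        rw [show U B' n = U B n from hBB'.symm]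
        exact Or.inl rfl
      exact hinrU n B B' this
    have hG : ∀ n, {B : ↥𝒜 | U B n ∈ ℱ' n}.Finite := fun n =>
      Set.Finite.preimage ((hUinj n).injOn) (hsub n).2
    have hK : ∀ n, {k : ℕ | ({Sum.inl k} : Set (PsiSpace 𝒜)) ∈ ℱ' n}.Finite := by
      intro n
      apply Set.Finite.preimage _ (hsub n).2
      apply Function.Injective.injOn
      intro k k' hkk'
      have h2 : ({Sum.inl k} : Set (PsiSpace 𝒜)) = {Sum.inl k'} := hkk'
      have h3 : (Sum.inl k : PsiSpace 𝒜) ∈ ({Sum.inl k'} : Set (PsiSpace 𝒜)) := by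
        rw [← h2]; rfl
      exact Sum.inl.inj h3
    obtain ⟨A, hA1, hA2⟩ := hkey (fun n => (hG n).toFinset)
      (fun n => ((hK n).toFinset.sup id) + 1)
    have hmem : (Sum.inr A : PsiSpace 𝒜) ∈ ⋃ n, starSet (⋃₀ ℱ' n) (𝒰 n) := by
      rw [hcover]; trivial
    obtain ⟨n, hn⟩ := Set.mem_iUnion.mp hmem
    obtain ⟨V, ⟨hV𝒰, hVint⟩, hAV⟩ := hn
    rcases hV𝒰 with ⟨B, rfl⟩ | ⟨k, rfl⟩
    swap
    · exact absurd hAV (by simp)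
    have hAB : A = B := hinrU n A B hAV
    subst hAB
    obtain ⟨y, hyU, W, hWF, hyW⟩ := hVint
    have hW𝒰 : W ∈ 𝒰 n := (hsub n).1 hWF
    have hAinf : ((A : Set ℕ) \ Set.Iio (f A n)).Nonempty :=
      ((had.1 A A.2).diff (Set.finite_Iio _)).nonempty
    rcases hW𝒰 with ⟨B', rfl⟩ | ⟨k, rfl⟩
    · have hB'G : B' ∈ (hG n).toFinset := (Set.Finite.mem_toFinset _).mpr hWF
      have hempty := hA2 n B' hB'G
      rcases hyU with hyU | ⟨k, hkA, hky⟩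
      · rcases hyW with hyW | ⟨k', hkB, hky'⟩
        · have hyU' : y = Sum.inr A := hyU
          have hyW' : y = Sum.inr B' := hyW
          have hAB' : A = B' := Sum.inr.inj (hyU'.symm.trans hyW')
          rw [← hAB', Set.inter_self] at hempty
          exact absurd hempty hAinf.ne_empty
        · rw [hyU] at hky'
          exact absurd hky' (by simp)
      · rcases hyW with hyW | ⟨k', hkB, hky'⟩
        · rw [hyW] at hky
          exact absurd hky (by simp)
        · have hkk' : k' = k := Sum.inl.inj (hky'.trans hky.symm)
          rw [hkk'] at hkB
          have : k ∈ (∅ : Set ℕ) := by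
            rw [← hempty]; exact ⟨hkA, hkB⟩
          exact this
    · have hkK : k ∈ (hK n).toFinset := (Set.Finite.mem_toFinset _).mpr hWF
      have hky : y = Sum.inl k := hyW
      rcases hyU with hyU | ⟨k'', hkA, hky''⟩
      · rw [hky] at hyU
        exact absurd hyU (by simp)
      · have hk : k'' = k := Sum.inl.inj (hky''.trans hky)
        subst hk
        have h1 : f A n ≤ k'' := not_lt.mp hkA.2
        have h2 : id k'' ≤ (hK n).toFinset.sup id := Finset.le_sup hkK
        have h3 := hA1 n
        simp only [id] at h2
        omega
  · refine ⟨f, fun ℱ => ?_⟩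
    obtain ⟨A, -, hA2⟩ := hkey ℱ (fun _ => 0)
    refine ⟨A, fun n => ?_⟩
    rw [Set.eq_empty_iff_forall_notMem]
    rintro y ⟨hyA, hyU⟩
    rw [Set.mem_iUnion₂] at hyU
    obtain ⟨B, hB, hyB⟩ := hyU
    have h0 := hA2 n B hB
    have hy : y ∈ ((A : Set ℕ) \ Set.Iio (f A n)) ∩ ((B : Set ℕ) \ Set.Iio (f B n)) :=
      ⟨hyA, hyB⟩
    rw [h0] at hy
    exact hy
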